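/- arXiv:2403.12603 — 2 statements merged into one kernel-verified Lean document; each statement's English description precedes it below -/
import Mathlib

section
/- Let μ be a finite compactly supported Borel measure on ℝ^d with support contained in [δ, 1−δ]^d for some 0 < δ < 1/2, and suppose t > 0 is such that |μ̂(n)| ≤ C|n|^{−t} for all nonzero n ∈ ℤ^d. Then there is a constant C' such that |μ̂(ξ)| ≤ C'|ξ|^{−t} for all ξ ∈ ℝ^d with |ξ| ≥ 1. -/
open MeasureTheory Filter Metric Set
open scoped ENNReal RealInnerProductSpace Topology FourierTransform

noncomputable section

/-- Fourier transform of a finite Borel measure on ℝ^d,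
`μ̂(ξ) = ∫ e^{-2πi⟨x,ξ⟩} dμ(x)`. -/
def mft {d : ℕ} (μ : Measure (EuclideanSpace ℝ (Fin d))) (ξ : EuclideanSpace ℝ (Fin d)) : ℂ :=
  ∫ x, Complex.exp ((-(2 * Real.pi * ⟪x, ξ⟫) : ℝ) * Complex.I) ∂μ

/-- Fourier transform of a function on ℝ^d. -/
def fft {d : ℕ} (f : EuclideanSpace ℝ (Fin d) → ℂ) (ξ : EuclideanSpace ℝ (Fin d)) : ℂ :=
  ∫ x, Complex.exp ((-(2 * Real.pi * ⟪x, ξ⟫) : ℝ) * Complex.I) * f x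

/-- The integer lattice point associated to `n : Fin d → ℤ`. -/
def latt {d : ℕ} (n : Fin d → ℤ) : EuclideanSpace ℝ (Fin d) :=
  (EuclideanSpace.equiv (Fin d) ℝ).symm (fun i => (n i : ℝ))

/-- The cube `[δ, 1-δ]^d` in ℝ^d. -/
def cube {d : ℕ} (δ : ℝ) : Set (EuclideanSpace ℝ (Fin d)) :=
  {x | ∀ i, x i ∈ Set.Icc δ (1 - δ)}

/-- The (s,θ)-energy `𝒥_{s,θ}(μ) = (∫ |μ̂(z)|^{2/θ} |z|^{s/θ-d} dz)^θ`. -/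
def J {d : ℕ} (μ : Measure (EuclideanSpace ℝ (Fin d))) (s θ : ℝ) : ℝ≥0∞ :=
  (∫⁻ z, (‖mft μ z‖₊ : ℝ≥0∞) ^ (2 / θ) * (‖z‖₊ : ℝ≥0∞) ^ (s / θ - d)) ^ θ

/-- The lattice energy sum `∑_{z ∈ ℤ^d \ {0}} |μ̂(z)|^{2/θ} |z|^{s/θ-d}`. -/
def latSum {d : ℕ} (μ : Measure (EuclideanSpace ℝ (Fin d))) (s θ : ℝ) : ℝ≥0∞ :=
  ∑' n : {n : Fin d → ℤ // n ≠ 0},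
    (‖mft μ (latt (n : Fin d → ℤ))‖₊ : ℝ≥0∞) ^ (2 / θ) *
      (‖latt (n : Fin d → ℤ)‖₊ : ℝ≥0∞) ^ (s / θ - d)

/-- Fourier dimension `dim_F μ = sup{s ≥ 0 : |μ̂(ξ)| ≲ |ξ|^{-s/2}}`. -/
def dimF {d : ℕ} (μ : Measure (EuclideanSpace ℝ (Fin d))) : EReal :=
  sSup {x : EReal | ∃ s : ℝ, x = (s : EReal) ∧ 0 ≤ s ∧
    ∃ C : ℝ, ∀ ξ, ξ ≠ 0 → ‖mft μ ξ‖ ≤ C * ‖ξ‖ ^ (-(s / 2))}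

/-- Sobolev dimension `dim_S μ = sup{s ∈ ℝ : ∫ |μ̂(z)|² |z|^{s-d} dz < ∞}`. -/
def dimS {d : ℕ} (μ : Measure (EuclideanSpace ℝ (Fin d))) : EReal :=
  sSup {x : EReal | ∃ s : ℝ, x = (s : EReal) ∧
    (∫⁻ z, (‖mft μ z‖₊ : ℝ≥0∞) ^ (2 : ℝ) * (‖z‖₊ : ℝ≥0∞) ^ (s - d)) ≠ ∞}

/-- Fourier spectrum `dim_F^θ μ = sup{s ≥ 0 : 𝒥_{s,θ}(μ) < ∞}`, with the
convention `dim_F^0 μ = dim_F μ`. -/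
def dimFθ {d : ℕ} (μ : Measure (EuclideanSpace ℝ (Fin d))) (θ : ℝ) : EReal :=
  if θ = 0 then dimF μ
  else sSup {x : EReal | ∃ s : ℝ, x = (s : EReal) ∧ 0 ≤ s ∧ J μ s θ ≠ ∞}

namespace K8

def E (r : ℝ) : ℂ := Complex.exp ((-(2 * Real.pi * r) : ℝ) * Complex.I)

lemma E_add (a b : ℝ) : E (a + b) = E a * E b := by
  rw [E, E, E, ← Complex.exp_add]; congr 1; push_cast; ring

lemma E_norm (r : ℝ) : ‖E r‖ = 1 := by
  rw [E, Complex.norm_exp_ofReal_mul_I]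

lemma E_zero : E 0 = 1 := by simp [E]

lemma E_continuous : Continuous E := by
  unfold E; fun_prop

def toSchwartz (f : ℝ → ℂ) (h1 : ContDiff ℝ ((⊤ : ℕ∞) : WithTop ℕ∞) f)
    (h2 : HasCompactSupport f) : SchwartzMap ℝ ℂ where
  toFun := f
  smooth' := h1
  decay' := by
    intro k n
    have h3 : Continuous fun x : ℝ => ‖x‖ ^ k * ‖iteratedFDeriv ℝ n f x‖ :=
      (continuous_norm.pow k).mul (h1.continuous_iteratedFDeriv (mod_cast le_top)).norm
    have h4 : HasCompactSupport fun x : ℝ => ‖x‖ ^ k * ‖iteratedFDeriv ℝ n f x‖ :=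
      ((h2.iteratedFDeriv n).norm).mul_left
    obtain ⟨C, hC⟩ := h4.exists_bound_of_continuous h3
    refine ⟨C, fun x => ?_⟩
    have := hC x
    rwa [Real.norm_eq_abs, abs_of_nonneg (by positivity)] at this

lemma summable_w : Summable (fun m : ℤ => (((1:ℝ) + |(m:ℝ)|) ^ 2)⁻¹) := by
  have hnat : Summable (fun n : ℕ => (((1:ℝ) + |(n:ℝ)|) ^ 2)⁻¹) := by
    have h0 : Summable (fun n : ℕ => ((n:ℝ) ^ 2)⁻¹) := by
      simpa using (Real.summable_one_div_nat_pow (p := 2)).2 one_lt_two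
    have h1 := (summable_nat_add_iff 1).2 h0
    apply h1.of_nonneg_of_le (fun n => by positivity)
    intro n
    rw [abs_of_nonneg (by positivity : (0:ℝ) ≤ (n:ℝ))]
    apply inv_anti₀ (by positivity)
    push_cast; nlinarith [sq_nonneg ((n:ℝ))]
  apply Summable.of_nat_of_neg
  · exact hnat
  · simpa using hnat

lemma w_pos (m : ℤ) : 0 < (((1:ℝ) + |(m:ℝ)|) ^ 2)⁻¹ := by positivity

lemma w_bound {u : ℝ} (hu : |u| ≤ 1/2) (m : ℤ) :
    (((1:ℝ) + |(m:ℝ) + u|) ^ 2)⁻¹ ≤ 4 * (((1:ℝ) + |(m:ℝ)|) ^ 2)⁻¹ := by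
  have h1 : (1:ℝ) + |(m:ℝ)| ≤ 2 * (1 + |(m:ℝ) + u|) := by
    have h2 : |(m:ℝ)| ≤ |(m:ℝ) + u| + |u| := by
      calc |(m:ℝ)| = |((m:ℝ) + u) + (-u)| := by ring_nf
      _ ≤ |(m:ℝ) + u| + |(-u)| := abs_add_le _ _
      _ = |(m:ℝ) + u| + |u| := by rw [abs_neg]
    linarith [abs_nonneg ((m:ℝ) + u)]
  have h3 : ((1:ℝ) + |(m:ℝ)|) ^ 2 ≤ 4 * (1 + |(m:ℝ) + u|) ^ 2 := by
    nlinarith [abs_nonneg ((m:ℝ)), abs_nonneg ((m:ℝ)+u)]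
  rw [show (4:ℝ) * (((1:ℝ) + |(m:ℝ)|) ^ 2)⁻¹ = (((1 + |(m:ℝ)|) ^ 2) / 4)⁻¹ by
    rw [inv_div]; ring]
  apply inv_anti₀ (by positivity)
  linarith

def upd {d : ℕ} (ξ : EuclideanSpace ℝ (Fin d)) (k : Fin d) (a : ℝ) :
    EuclideanSpace ℝ (Fin d) :=
  (WithLp.equiv 2 _).symm (Function.update ((WithLp.equiv 2 _) ξ) k a)

lemma upd_apply {d : ℕ} (ξ : EuclideanSpace ℝ (Fin d)) (k : Fin d) (a : ℝ) (i : Fin d) :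
    upd ξ k a i = Function.update ξ k a i := rfl

lemma inner_update {d : ℕ} (x ξ : EuclideanSpace ℝ (Fin d)) (k : Fin d) (a : ℝ) :
    ⟪x, upd ξ k a⟫ = ⟪x, ξ⟫ + x k * (a - ξ k) := by
  simp only [PiLp.inner_apply, RCLike.inner_apply, conj_trivial, upd_apply]
  have h : ∀ i, x i * Function.update ξ k a i
      = x i * ξ i + (if i = k then x k * (a - ξ k) else 0) := by
    intro i
    by_cases hik : i = k
    · subst hik; rw [Function.update_self]; simp; ring
    · rw [Function.update_of_ne hik]; simp [hik]
  simp_rw [mul_comm _ (x.ofLp _)]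
  simp_rw [h, Finset.sum_add_distrib, Finset.sum_ite_eq' Finset.univ k]
  simp

lemma norm_update_ge {d : ℕ} (ξ : EuclideanSpace ℝ (Fin d)) (k : Fin d) (a : ℝ) :
    ‖ξ‖ - |a - ξ k| ≤ ‖upd ξ k a‖ := by
  have h : ξ = upd ξ k a + (EuclideanSpace.single k (ξ k - a) : EuclideanSpace ℝ (Fin d)) := by
    apply PiLp.ext
    intro i
    rw [PiLp.add_apply, upd_apply]
    by_cases hik : i = k
    · subst hik
      simp [Function.update_self, EuclideanSpace.single_apply]
    · simp [Function.update_of_ne hik, EuclideanSpace.single_apply, hik]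
  have h2 : ‖ξ‖ ≤ ‖upd ξ k a‖ + |a - ξ k| := by
    calc ‖ξ‖ = ‖upd ξ k a + (EuclideanSpace.single k (ξ k - a) : EuclideanSpace ℝ (Fin d))‖ := by
          rw [← h]
    _ ≤ ‖upd ξ k a‖ + ‖(EuclideanSpace.single k (ξ k - a) : EuclideanSpace ℝ (Fin d))‖ :=
          norm_add_le _ _
    _ = ‖upd ξ k a‖ + |a - ξ k| := by
        rw [EuclideanSpace.norm_single, Real.norm_eq_abs, abs_sub_comm]
  linarith

lemma abs_coord_le_norm {d : ℕ} (x : EuclideanSpace ℝ (Fin d)) (i : Fin d) : |x i| ≤ ‖x‖ := by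
  have h := abs_real_inner_le_norm (EuclideanSpace.single i (1 : ℝ)) x
  rw [EuclideanSpace.inner_single_left, EuclideanSpace.norm_single] at h
  simpa using h

lemma exists_F (δ : ℝ) (hδ : 0 < δ) (hδ' : δ < 1/2) (b : ℝ) (hb : 2 ≤ b) :
    ∃ F : ℝ → ℂ, ∃ K : ℝ, 0 < K ∧
      (∀ η : ℝ, ‖F η‖ ≤ K * (1 + |η|) ^ (-b)) ∧
      (∀ u : ℝ, |u| ≤ 1/2 → ∀ y ∈ Set.Icc δ (1-δ),
        ∑' m : ℤ, F (↑m + u) * E (-(↑m * y)) = E (y * u)) := by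
  have hπ := Real.pi_pos
  set B : ContDiffBump ((1:ℝ)/2) := ⟨1/2 - δ/2, 1/2 - δ/4, by linarith, by linarith⟩ with hB
  set φ : ℝ → ℂ := fun x => (B x : ℂ) with hφ
  have hsm : ContDiff ℝ ((⊤ : ℕ∞) : WithTop ℕ∞) φ :=
    Complex.ofRealCLM.contDiff.comp B.contDiff
  have hcs : HasCompactSupport φ :=
    B.hasCompactSupport.comp_left (g := Complex.ofReal) Complex.ofReal_zero
  have hsupp : ∀ x : ℝ, x ∉ Set.Ioo (0:ℝ) 1 → φ x = 0 := by
    intro x hx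
    have hns : x ∉ Function.support B := by
      rw [B.support_eq]
      intro hmem
      rw [mem_ball, Real.dist_eq] at hmem
      have h2 := abs_lt.1 hmem
      simp only [hB] at h2
      exact hx ⟨by linarith [h2.1], by linarith [h2.2]⟩
    have : B x = 0 := by
      by_contra hne
      exact hns (Function.mem_support.2 hne)
    simp [hφ, this]
  have hone : ∀ y ∈ Set.Icc δ (1 - δ), φ y = 1 := by
    intro y hy
    rw [Set.mem_Icc] at hy
    have : B y = 1 := B.one_of_mem_closedBall (by
      rw [mem_closedBall, Real.dist_eq, abs_le]
      constructor
      · simp only [hB]; linarith [hy.1]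
      · simp only [hB]; linarith [hy.2])
    simp [hφ, this]
  set Φ : SchwartzMap ℝ ℂ := toSchwartz φ hsm hcs with hΦ
  set F : ℝ → ℂ := 𝓕 φ with hF
  have hFeq : ∀ x, (SchwartzMap.fourierTransformCLM ℂ Φ) x = F x := by
    intro x; rw [SchwartzMap.fourierTransformCLM_apply]; rfl
  set N : ℕ := ⌈b⌉₊ with hN
  obtain ⟨C0, hC0, hC0'⟩ := (SchwartzMap.fourierTransformCLM ℂ Φ).decay 0 0
  obtain ⟨CN, hCN, hCN'⟩ := (SchwartzMap.fourierTransformCLM ℂ Φ).decay N 0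
  set K := (2:ℝ) ^ N * (C0 + CN) with hK
  have hKpos : 0 < K := by positivity
  have hdecay : ∀ η : ℝ, ‖F η‖ ≤ K * (1 + |η|) ^ (-b) := by
    intro η
    have h0 := hC0' η; have hN' := hCN' η
    rw [norm_iteratedFDeriv_zero, hFeq] at h0 hN'
    rw [pow_zero, one_mul] at h0
    rw [Real.norm_eq_abs] at hN'
    have h1 : (1 + |η|) ^ N ≤ 2 ^ N * (1 + |η| ^ N) := by
      calc (1 + |η|) ^ N ≤ (2 * max 1 |η|) ^ N := by
            apply pow_le_pow_left₀ (by positivity)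
            rcases le_total 1 |η| with h | h
            · rw [max_eq_right h]; linarith
            · rw [max_eq_left h]; linarith
      _ = 2 ^ N * (max 1 |η|) ^ N := mul_pow _ _ _
      _ ≤ 2 ^ N * (1 + |η| ^ N) := by
            apply mul_le_mul_of_nonneg_left _ (by positivity)
            rcases le_total 1 |η| with h | h
            · rw [max_eq_right h]; linarith [pow_nonneg (abs_nonneg η) N]
            · rw [max_eq_left h, one_pow]; linarith [pow_nonneg (abs_nonneg η) N]
    have key : ‖F η‖ * (1 + |η|) ^ N ≤ K := by
      calc ‖F η‖ * (1 + |η|) ^ N ≤ ‖F η‖ * (2 ^ N * (1 + |η| ^ N)) :=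
            mul_le_mul_of_nonneg_left h1 (norm_nonneg _)
      _ = 2 ^ N * (‖F η‖ + |η| ^ N * ‖F η‖) := by ring
      _ ≤ 2 ^ N * (C0 + CN) := by
            apply mul_le_mul_of_nonneg_left (add_le_add h0 hN') (by positivity)
    have hb1 : (1:ℝ) ≤ 1 + |η| := by linarith [abs_nonneg η]
    have h3 : (1 + |η|) ^ b ≤ (1 + |η|) ^ (N:ℝ) :=
      Real.rpow_le_rpow_of_exponent_le hb1 (Nat.le_ceil b)
    rw [Real.rpow_natCast] at h3
    calc ‖F η‖ ≤ K / (1 + |η|) ^ N := (le_div_iff₀ (by positivity)).2 key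
    _ ≤ K / (1 + |η|) ^ b := by
          apply div_le_div_of_nonneg_left hKpos.le (Real.rpow_pos_of_pos (by positivity) b) h3
    _ = K * (1 + |η|) ^ (-b) := by
          rw [Real.rpow_neg (by positivity), div_eq_mul_inv]
  refine ⟨F, K, hKpos, hdecay, ?_⟩
  intro u hu y hy
  set g : C(ℝ, ℂ) := ⟨fun x => E (x * u) * φ x,
    (E_continuous.comp (continuous_id.mul continuous_const)).mul
      (Complex.continuous_ofReal.comp B.continuous)⟩ with hg
  have hgsupp : ∀ x : ℝ, x ∉ Set.Ioo (0:ℝ) 1 → g x = 0 := by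
    intro x hx; simp [hg, hsupp x hx]
  have hFg : ∀ η : ℝ, 𝓕 (⇑g) η = F (η + u) := by
    intro η
    rw [hF, Real.fourier_real_eq_integral_exp_smul,
      Real.fourier_real_eq_integral_exp_smul]
    congr 1; funext v
    rw [smul_eq_mul, smul_eq_mul]
    show Complex.exp _ * (E (v * u) * φ v) = Complex.exp _ * φ v
    rw [E, ← mul_assoc, ← Complex.exp_add]
    congr 2
    push_cast; ring
  have h_norm : ∀ Kc : TopologicalSpace.Compacts ℝ,
      Summable fun n : ℤ => ‖(g.comp (ContinuousMap.addRight (n:ℝ))).restrict Kc‖ := by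
    intro Kc
    obtain ⟨r, hr⟩ := Kc.isCompact.isBounded.subset_closedBall 0
    apply summable_of_ne_finset_zero (s := Finset.Icc (-(⌈r⌉ + 2)) (⌈r⌉ + 2))
    intro n hn
    rw [Finset.mem_Icc, not_and_or, not_le, not_le] at hn
    have hceil : r ≤ (⌈r⌉ : ℝ) := Int.le_ceil r
    have hzero : (g.comp (ContinuousMap.addRight (n:ℝ))).restrict Kc = 0 := by
      ext ⟨x, hx⟩
      simp only [ContinuousMap.restrict_apply, ContinuousMap.comp_apply,
        ContinuousMap.coe_addRight, ContinuousMap.zero_apply]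
      apply hgsupp
      have hxr : |x| ≤ r := by
        have := hr hx; rwa [mem_closedBall, Real.dist_eq, sub_zero] at this
      have hxr' := abs_le.1 hxr
      intro hmem
      rcases hn with hn | hn
      · have h1 : (n:ℝ) ≤ -(⌈r⌉:ℝ) - 3 := by
          have h2 : n ≤ -(⌈r⌉ + 2) - 1 := by omega
          have h3 : (n:ℝ) ≤ ((-(⌈r⌉ + 2) - 1 : ℤ) : ℝ) := by exact_mod_cast h2
          push_cast at h3 ⊢; linarith
        have := hmem.1; linarith
      · have h1 : (⌈r⌉:ℝ) + 3 ≤ (n:ℝ) := by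
          have h2 : ⌈r⌉ + 2 + 1 ≤ n := by omega
          have h3 : ((⌈r⌉ + 2 + 1 : ℤ) : ℝ) ≤ (n:ℝ) := by exact_mod_cast h2
          push_cast at h3 ⊢; linarith
        have := hmem.2; linarith
    rw [hzero, norm_zero]
  have h_sum : Summable fun n : ℤ => 𝓕 (⇑g) (n:ℝ) := by
    apply Summable.of_norm_bounded (summable_w.mul_left (4 * K))
    intro m
    rw [hFg]
    calc ‖F (↑m + u)‖ ≤ K * (1 + |(m:ℝ) + u|) ^ (-b) := hdecay _
    _ ≤ K * (((1:ℝ) + |(m:ℝ) + u|) ^ 2)⁻¹ := by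
        apply mul_le_mul_of_nonneg_left _ hKpos.le
        have h1 : (0:ℝ) < 1 + |(m:ℝ) + u| := by positivity
        rw [Real.rpow_neg h1.le, ← Real.rpow_natCast (1 + |(m:ℝ) + u|) 2]
        apply inv_anti₀ (Real.rpow_pos_of_pos h1 _)
        apply Real.rpow_le_rpow_of_exponent_le (by linarith [abs_nonneg ((m:ℝ)+u)])
        push_cast; linarith
    _ ≤ 4 * K * (((1:ℝ) + |(m:ℝ)|) ^ 2)⁻¹ := by
        have := w_bound hu m
        calc K * (((1:ℝ) + |(m:ℝ) + u|) ^ 2)⁻¹ ≤ K * (4 * (((1:ℝ) + |(m:ℝ)|) ^ 2)⁻¹) :=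
              mul_le_mul_of_nonneg_left this hKpos.le
        _ = 4 * K * (((1:ℝ) + |(m:ℝ)|) ^ 2)⁻¹ := by ring
  have key := Real.tsum_eq_tsum_fourier h_norm h_sum y
  have hy' := hy
  rw [Set.mem_Icc] at hy'
  have hL : ∑' n : ℤ, g (y + (n:ℝ)) = E (y * u) := by
    rw [tsum_eq_single 0 ?_]
    · have hgy : g y = E (y * u) := by
        show E (y * u) * φ y = E (y * u)
        rw [hone y hy, mul_one]
      simpa using hgy
    · intro n hn
      apply hgsupp
      intro hmem
      rcases lt_or_gt_of_ne hn with h | h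
      · have hn1 : (n:ℝ) ≤ -1 := by exact_mod_cast (by omega : n ≤ -1)
        have := hmem.1; linarith [hy'.2]
      · have hn1 : (1:ℝ) ≤ (n:ℝ) := by exact_mod_cast h
        have := hmem.2; linarith [hy'.1]
  have hR : ∑' n : ℤ, 𝓕 (⇑g) (n:ℝ) * fourier n (y : UnitAddCircle)
      = ∑' m : ℤ, F (↑m + u) * E (-(↑m * y)) := by
    congr 1; funext n
    rw [hFg]
    congr 1
    rw [fourier_coe_apply, E]
    congr 1
    push_cast; ring
  rw [hL, hR] at key
  exact key.symm

lemma mft_eq_E {d : ℕ} (μ : Measure (EuclideanSpace ℝ (Fin d))) (ξ : EuclideanSpace ℝ (Fin d)) :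
    mft μ ξ = ∫ x, E ⟪x, ξ⟫ ∂μ := rfl

lemma norm_mft_le {d : ℕ} (μ : Measure (EuclideanSpace ℝ (Fin d))) [IsFiniteMeasure μ]
    (ξ : EuclideanSpace ℝ (Fin d)) : ‖mft μ ξ‖ ≤ (μ Set.univ).toReal := by
  rw [mft_eq_E]
  calc ‖∫ x, E ⟪x, ξ⟫ ∂μ‖ ≤ 1 * (μ Set.univ).toReal := by
        apply norm_integral_le_of_norm_le_const
        filter_upwards with x
        rw [E_norm]
  _ = (μ Set.univ).toReal := one_mul _

lemma key_identity {d : ℕ} (μ : Measure (EuclideanSpace ℝ (Fin d))) [IsFiniteMeasure μ]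
    {δ : ℝ} (hμ : μ (cube δ)ᶜ = 0) (F : ℝ → ℂ) {u : ℝ}
    (hFsum : Summable fun m : ℤ => ‖F (↑m + u)‖)
    (hser : ∀ y ∈ Set.Icc δ (1-δ), ∑' m : ℤ, F (↑m + u) * E (-(↑m * y)) = E (y * u))
    (ξ : EuclideanSpace ℝ (Fin d)) (k : Fin d) (n : ℤ) (hu : u = ξ k - n) :
    mft μ ξ = ∑' m : ℤ, F (↑m + u) * mft μ (upd ξ k ((n - m : ℤ) : ℝ)) := by
  have hae : ∀ᵐ x ∂μ, x ∈ cube δ := by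
    rw [MeasureTheory.ae_iff]
    convert hμ using 2; rfl
  have hpt : ∀ x ∈ cube δ,
      E ⟪x, ξ⟫ = ∑' m : ℤ, F (↑m + u) * E ⟪x, upd ξ k ((n - m : ℤ) : ℝ)⟫ := by
    intro x hx
    have hy : x k ∈ Set.Icc δ (1-δ) := hx k
    have hterm : ∀ m : ℤ, E ⟪x, upd ξ k ((n - m : ℤ) : ℝ)⟫
        = E ⟪x, ξ⟫ * (E (-(x k * u)) * E (-(↑m * x k))) := by
      intro m
      rw [inner_update x ξ k _]
      have harg : x k * (((n - m : ℤ) : ℝ) - ξ k) = -(x k * u) + -(↑m * x k) := by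
        rw [hu]; push_cast; ring
      rw [harg, E_add, E_add]
    calc E ⟪x, ξ⟫ = (E ⟪x, ξ⟫ * E (-(x k * u))) * E (x k * u) := by
          rw [mul_assoc, ← E_add]
          simp [E_zero]
    _ = (E ⟪x, ξ⟫ * E (-(x k * u))) * ∑' m : ℤ, F (↑m + u) * E (-(↑m * x k)) := by
          rw [hser (x k) hy]
    _ = ∑' m : ℤ, (E ⟪x, ξ⟫ * E (-(x k * u))) * (F (↑m + u) * E (-(↑m * x k))) := by
          rw [tsum_mul_left]
    _ = ∑' m : ℤ, F (↑m + u) * E ⟪x, upd ξ k ((n - m : ℤ) : ℝ)⟫ := by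
          congr 1; funext m; rw [hterm m]; ring
  have hmeas : ∀ m : ℤ,
      AEStronglyMeasurable (fun x : EuclideanSpace ℝ (Fin d) =>
        F (↑m + u) * E ⟪x, upd ξ k ((n - m : ℤ) : ℝ)⟫) μ := by
    intro m
    apply Continuous.aestronglyMeasurable
    exact continuous_const.mul (E_continuous.comp (continuous_id.inner continuous_const))
  have hnn : ∀ (m : ℤ) (x : EuclideanSpace ℝ (Fin d)),
      ‖F (↑m + u) * E ⟪x, upd ξ k ((n - m : ℤ) : ℝ)⟫‖₊ = ‖F (↑m + u)‖₊ := by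
    intro m x
    rw [nnnorm_mul]
    have : ‖E ⟪x, upd ξ k ((n - m : ℤ) : ℝ)⟫‖₊ = 1 := by
      ext; simpa using E_norm _
    rw [this, mul_one]
  have hsum_nn : Summable fun m : ℤ => ‖F (↑m + u)‖₊ := by
    rw [← NNReal.summable_coe]
    simpa [coe_nnnorm] using hFsum
  have hlint : ∑' m : ℤ, ∫⁻ x, ‖F (↑m + u) * E ⟪x, upd ξ k ((n - m : ℤ) : ℝ)⟫‖₊ ∂μ ≠ ⊤ := by
    have heach : ∀ m : ℤ, ∫⁻ x, ‖F (↑m + u) * E ⟪x, upd ξ k ((n - m : ℤ) : ℝ)⟫‖₊ ∂μ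
        = (‖F (↑m + u)‖₊ : ℝ≥0∞) * μ Set.univ := by
      intro m
      simp_rw [hnn m]
      rw [MeasureTheory.lintegral_const]
    simp_rw [heach]
    rw [ENNReal.tsum_mul_right]
    exact ENNReal.mul_ne_top (ENNReal.tsum_coe_ne_top_iff_summable.2 hsum_nn)
      (measure_ne_top μ _)
  calc mft μ ξ = ∫ x, ∑' m : ℤ, F (↑m + u) * E ⟪x, upd ξ k ((n - m : ℤ) : ℝ)⟫ ∂μ := by
        rw [mft_eq_E]
        apply integral_congr_ae
        filter_upwards [hae] with x hx
        exact hpt x hx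
  _ = ∑' m : ℤ, ∫ x, F (↑m + u) * E ⟪x, upd ξ k ((n - m : ℤ) : ℝ)⟫ ∂μ :=
        integral_tsum hmeas hlint
  _ = ∑' m : ℤ, F (↑m + u) * mft μ (upd ξ k ((n - m : ℤ) : ℝ)) := by
        congr 1; funext m
        rw [mft_eq_E, integral_const_mul]

lemma per_term {t a B R : ℝ} (ht : 0 < t) (ha : 0 ≤ a) (hB : 0 ≤ B) (hR : 1 ≤ R)
    (hRB : R ≤ 1 + B + a) :
    (1 + a) ^ (-(t+2)) * (1 + B) ^ (-t) ≤ 2 ^ t * ((1+a)^2)⁻¹ * R ^ (-t) := by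
  have h1a : (0:ℝ) < 1 + a := by linarith
  have h1B : (0:ℝ) < 1 + B := by linarith
  have hR0 : (0:ℝ) < R := by linarith
  have hprod : R ≤ 2 * ((1+a) * (1+B)) := by nlinarith
  have hRt : R ^ t ≤ 2 ^ t * ((1+a) ^ t * (1+B) ^ t) := by
    calc R ^ t ≤ (2 * ((1+a) * (1+B))) ^ t :=
          Real.rpow_le_rpow hR0.le hprod ht.le
    _ = 2 ^ t * ((1+a) * (1+B)) ^ t := Real.mul_rpow (by norm_num) (by positivity)
    _ = 2 ^ t * ((1+a) ^ t * (1+B) ^ t) := by rw [Real.mul_rpow h1a.le h1B.le]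
  have hsplit : (1 + a) ^ (-(t+2)) = ((1+a)^2)⁻¹ * (1+a) ^ (-t) := by
    rw [show -(t+2) = -(2:ℝ) + (-t) by ring, Real.rpow_add h1a]
    congr 1
    rw [Real.rpow_neg h1a.le, show ((2:ℝ)) = ((2:ℕ):ℝ) by norm_num, Real.rpow_natCast]
  have hX : (0:ℝ) < (1+a) ^ t * (1+B) ^ t := by positivity
  have hcore : (1+a) ^ (-t) * (1+B) ^ (-t) ≤ 2 ^ t * R ^ (-t) := by
    have h9 : (0:ℝ) < R ^ t := Real.rpow_pos_of_pos hR0 t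
    have h10 : 1 / ((1+a) ^ t * (1+B) ^ t) ≤ 2 ^ t / R ^ t := by
      rw [div_le_div_iff₀ hX h9]
      nlinarith [hRt, h9]
    rw [Real.rpow_neg h1a.le, Real.rpow_neg h1B.le, Real.rpow_neg hR0.le]
    calc ((1+a) ^ t)⁻¹ * ((1+B) ^ t)⁻¹ = 1 / ((1+a) ^ t * (1+B) ^ t) := by
          rw [← mul_inv, one_div]
    _ ≤ 2 ^ t / R ^ t := h10
    _ = 2 ^ t * (R ^ t)⁻¹ := by rw [div_eq_mul_inv]
  calc (1 + a) ^ (-(t+2)) * (1 + B) ^ (-t)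
      = ((1+a)^2)⁻¹ * ((1+a) ^ (-t) * (1+B) ^ (-t)) := by rw [hsplit]; ring
  _ ≤ ((1+a)^2)⁻¹ * (2 ^ t * R ^ (-t)) := by
        apply mul_le_mul_of_nonneg_left hcore (by positivity)
  _ = 2 ^ t * ((1+a)^2)⁻¹ * R ^ (-t) := by ring

end K8

/-- Kahane's lemma: polynomial Fourier decay along ℤ^d implies the same
decay along all of ℝ^d, for measures supported in [δ,1-δ]^d. -/
theorem stmt8 (d : ℕ) (δ : ℝ) (hδ : 0 < δ) (hδ' : δ < 1 / 2)
    (μ : Measure (EuclideanSpace ℝ (Fin d))) [IsFiniteMeasure μ]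
    (hμ : μ (cube δ)ᶜ = 0) (t C : ℝ) (ht : 0 < t)
    (hdecay : ∀ n : Fin d → ℤ, n ≠ 0 → ‖mft μ (latt n)‖ ≤ C * ‖latt n‖ ^ (-t)) :
    ∃ C' : ℝ, ∀ ξ : EuclideanSpace ℝ (Fin d), 1 ≤ ‖ξ‖ →
      ‖mft μ ξ‖ ≤ C' * ‖ξ‖ ^ (-t) := by
  classical
  set M := (μ Set.univ).toReal with hM
  have hM0 : 0 ≤ M := ENNReal.toReal_nonneg
  obtain ⟨F, K, hK, hFdec, hFser⟩ := K8.exists_F δ hδ hδ' (t + 2) (by linarith)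
  have hSw : Summable (fun m : ℤ => (((1:ℝ) + |(m:ℝ)|) ^ 2)⁻¹) := K8.summable_w
  set S : ℝ := ∑' m : ℤ, (((1:ℝ) + |(m:ℝ)|) ^ 2)⁻¹ with hS
  have hS1 : 1 ≤ S := by
    have h0 : (((1:ℝ) + |((0:ℤ):ℝ)|) ^ 2)⁻¹ ≤ S :=
      Summable.le_tsum hSw 0 (fun m _ => (K8.w_pos m).le)
    simpa using h0
  have hFw : ∀ u : ℝ, |u| ≤ 1/2 → ∀ m : ℤ,
      ‖F (↑m + u)‖ ≤ 4 * K * (((1:ℝ) + |(m:ℝ)|) ^ 2)⁻¹ := by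
    intro u hu m
    calc ‖F (↑m + u)‖ ≤ K * (1 + |(m:ℝ) + u|) ^ (-(t+2)) := hFdec _
    _ ≤ K * (((1:ℝ) + |(m:ℝ) + u|) ^ 2)⁻¹ := by
        apply mul_le_mul_of_nonneg_left _ hK.le
        have h1 : (0:ℝ) < 1 + |(m:ℝ) + u| := by positivity
        rw [Real.rpow_neg h1.le, ← Real.rpow_natCast (1 + |(m:ℝ) + u|) 2]
        apply inv_anti₀ (Real.rpow_pos_of_pos h1 _)
        apply Real.rpow_le_rpow_of_exponent_le (by linarith [abs_nonneg ((m:ℝ)+u)])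
        push_cast; linarith
    _ ≤ 4 * K * (((1:ℝ) + |(m:ℝ)|) ^ 2)⁻¹ := by
        calc K * (((1:ℝ) + |(m:ℝ) + u|) ^ 2)⁻¹ ≤ K * (4 * (((1:ℝ) + |(m:ℝ)|) ^ 2)⁻¹) :=
              mul_le_mul_of_nonneg_left (K8.w_bound hu m) hK.le
        _ = 4 * K * (((1:ℝ) + |(m:ℝ)|) ^ 2)⁻¹ := by ring
  have hFsummable : ∀ u : ℝ, |u| ≤ 1/2 → Summable fun m : ℤ => ‖F (↑m + u)‖ := by
    intro u hu
    exact Summable.of_nonneg_of_le (fun m => norm_nonneg _) (hFw u hu) (hSw.mul_left (4*K))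
  have hind : ∀ k : ℕ, ∃ A : ℝ, 0 < A ∧ ∀ ξ : EuclideanSpace ℝ (Fin d),
      (∀ i : Fin d, k ≤ (i : ℕ) → ∃ z : ℤ, ξ i = (z : ℝ)) →
      ‖mft μ ξ‖ ≤ A * (1 + ‖ξ‖) ^ (-t) := by
    intro k
    induction k with
    | zero =>
      refine ⟨M + 2 ^ t * (max C 0) + 1, by positivity, ?_⟩
      intro ξ hint
      choose z hz using fun i => hint i (Nat.zero_le _)
      by_cases hz0 : z = 0
      · have hξ0 : ξ = 0 := by
          apply PiLp.ext; intro i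
          rw [hz i, hz0]; simp
        have h1 : ‖mft μ ξ‖ ≤ M := K8.norm_mft_le μ ξ
        rw [hξ0]
        rw [hξ0] at h1
        simp only [norm_zero, add_zero, Real.one_rpow, mul_one]
        have h2 : (0:ℝ) ≤ 2 ^ t * max C 0 := by positivity
        linarith
      · have hξl : ξ = latt z := by
          apply PiLp.ext; intro i; rw [hz i]; rfl
        have hd := hdecay z hz0
        have hr1 : 1 ≤ ‖latt z‖ := by
          obtain ⟨i, hi⟩ := Function.ne_iff.1 hz0
          have ha1 : (1:ℤ) ≤ |z i| := Int.one_le_abs hi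
          have h1 : (1:ℝ) ≤ |(z i : ℝ)| := by
            rw [← Int.cast_abs]; exact_mod_cast ha1
          have h2 : |latt z i| ≤ ‖latt z‖ := K8.abs_coord_le_norm (latt z) i
          have h3 : latt z i = (z i : ℝ) := rfl
          rw [h3] at h2; linarith
        set r := ‖latt z‖ with hr
        have hr0 : (0:ℝ) < r := by linarith
        have e1 : (1 + r) ^ t ≤ 2 ^ t * r ^ t := by
          calc (1+r)^t ≤ (2*r)^t := Real.rpow_le_rpow (by linarith) (by linarith) ht.le
          _ = 2^t * r^t := Real.mul_rpow (by norm_num) hr0.le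
        have e2 : r ^ (-t) ≤ 2 ^ t * (1 + r) ^ (-t) := by
          rw [Real.rpow_neg hr0.le, Real.rpow_neg (by linarith : (0:ℝ) ≤ 1 + r)]
          calc (r ^ t)⁻¹ = 2 ^ t * (2 ^ t * r ^ t)⁻¹ := by
                rw [mul_inv, ← mul_assoc, mul_inv_cancel₀ (by positivity : (2:ℝ)^t ≠ 0), one_mul]
          _ ≤ 2 ^ t * ((1+r) ^ t)⁻¹ := by
                apply mul_le_mul_of_nonneg_left _ (by positivity)
                exact inv_anti₀ (Real.rpow_pos_of_pos (by linarith) t) e1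
        rw [hξl]
        calc ‖mft μ (latt z)‖ ≤ C * r ^ (-t) := hd
        _ ≤ max C 0 * r ^ (-t) :=
              mul_le_mul_of_nonneg_right (le_max_left _ _) (Real.rpow_nonneg hr0.le _)
        _ ≤ max C 0 * (2 ^ t * (1+r) ^ (-t)) :=
              mul_le_mul_of_nonneg_left e2 (le_max_right _ _)
        _ = 2 ^ t * max C 0 * (1 + r) ^ (-t) := by ring
        _ ≤ (M + 2 ^ t * max C 0 + 1) * (1 + r) ^ (-t) := by
              apply mul_le_mul_of_nonneg_right _ (Real.rpow_nonneg (by linarith) _)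
              linarith
    | succ k ih =>
      obtain ⟨A, hA, hbound⟩ := ih
      have h2t : (0:ℝ) < 2 ^ t := Real.rpow_pos_of_pos (by norm_num) t
      refine ⟨(1 + 4 * K * 2 ^ t * S) * A, by positivity, ?_⟩
      intro ξ hint
      by_cases hkd : k < d
      · set kk : Fin d := ⟨k, hkd⟩ with hkk
        set nn : ℤ := round (ξ kk) with hnn
        set u : ℝ := ξ kk - nn with hudef
        have hu2 : |u| ≤ 1/2 := by rw [hudef]; exact abs_sub_round (ξ kk)
        have hid := K8.key_identity μ hμ F (hFsummable u hu2)
          (fun y hy => hFser u hu2 y hy) ξ kk nn hudef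
        set R : ℝ := 1 + ‖ξ‖ with hR
        have hR1 : 1 ≤ R := by rw [hR]; linarith [norm_nonneg ξ]
        have hterm : ∀ m : ℤ, ‖F (↑m + u) * mft μ (K8.upd ξ kk ((nn - m : ℤ) : ℝ))‖
            ≤ (4 * K * 2 ^ t * A * R ^ (-t)) * (((1:ℝ) + |(m:ℝ)|) ^ 2)⁻¹ := by
          intro m
          set ξm := K8.upd ξ kk ((nn - m : ℤ) : ℝ) with hxm
          have hint' : ∀ i : Fin d, k ≤ (i : ℕ) → ∃ z : ℤ, ξm i = (z : ℝ) := by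
            intro i hi
            by_cases hik : i = kk
            · refine ⟨nn - m, ?_⟩
              rw [hik, hxm, K8.upd_apply, Function.update_self]
            · have hik' : k + 1 ≤ (i : ℕ) := by
                rcases Nat.lt_or_ge (i : ℕ) (k+1) with h | h
                · exfalso; apply hik; apply Fin.ext
                  simp only [hkk]; omega
                · exact h
              obtain ⟨zz, hzz⟩ := hint i hik'
              refine ⟨zz, ?_⟩
              rw [hxm, K8.upd_apply, Function.update_of_ne hik, hzz]
          have h1 : ‖mft μ ξm‖ ≤ A * (1 + ‖ξm‖) ^ (-t) := hbound ξm hint'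
          have h2 : ‖F (↑m + u)‖ ≤ K * (1 + |(m:ℝ) + u|) ^ (-(t+2)) := hFdec _
          have hRB : R ≤ 1 + ‖ξm‖ + |(m:ℝ) + u| := by
            have h3 := K8.norm_update_ge ξ kk ((nn - m : ℤ) : ℝ)
            have h4 : |((nn - m : ℤ) : ℝ) - ξ kk| = |(m:ℝ) + u| := by
              rw [show ((nn - m : ℤ) : ℝ) - ξ kk = -((m:ℝ) + u) by
                rw [hudef]; push_cast; ring, abs_neg]
            rw [h4] at h3
            rw [hR]; linarith
          have h5 := K8.per_term ht (abs_nonneg ((m:ℝ) + u)) (norm_nonneg ξm) hR1 hRB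
          calc ‖F (↑m + u) * mft μ ξm‖ = ‖F (↑m + u)‖ * ‖mft μ ξm‖ := norm_mul _ _
          _ ≤ (K * (1 + |(m:ℝ) + u|) ^ (-(t+2))) * (A * (1 + ‖ξm‖) ^ (-t)) := by
                apply mul_le_mul h2 h1 (norm_nonneg _) (by positivity)
          _ = (K * A) * ((1 + |(m:ℝ) + u|) ^ (-(t+2)) * (1 + ‖ξm‖) ^ (-t)) := by ring
          _ ≤ (K * A) * (2 ^ t * ((1 + |(m:ℝ) + u|)^2)⁻¹ * R ^ (-t)) := by
                apply mul_le_mul_of_nonneg_left h5 (by positivity)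
          _ ≤ (K * A) * (2 ^ t * (4 * (((1:ℝ) + |(m:ℝ)|) ^ 2)⁻¹) * R ^ (-t)) := by
                apply mul_le_mul_of_nonneg_left _ (by positivity)
                apply mul_le_mul_of_nonneg_right _ (Real.rpow_nonneg (by linarith) _)
                apply mul_le_mul_of_nonneg_left (K8.w_bound hu2 m) (by positivity)
          _ = (4 * K * 2 ^ t * A * R ^ (-t)) * (((1:ℝ) + |(m:ℝ)|) ^ 2)⁻¹ := by ring
        have hsumm : Summable fun m : ℤ =>
            ‖F (↑m + u) * mft μ (K8.upd ξ kk ((nn - m : ℤ) : ℝ))‖ :=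
          Summable.of_nonneg_of_le (fun m => norm_nonneg _) hterm (hSw.mul_left _)
        calc ‖mft μ ξ‖
            = ‖∑' m : ℤ, F (↑m + u) * mft μ (K8.upd ξ kk ((nn - m : ℤ) : ℝ))‖ := by rw [hid]
        _ ≤ ∑' m : ℤ, ‖F (↑m + u) * mft μ (K8.upd ξ kk ((nn - m : ℤ) : ℝ))‖ :=
              norm_tsum_le_tsum_norm hsumm
        _ ≤ ∑' m : ℤ, (4 * K * 2 ^ t * A * R ^ (-t)) * (((1:ℝ) + |(m:ℝ)|) ^ 2)⁻¹ :=
              Summable.tsum_le_tsum hterm hsumm (hSw.mul_left _)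
        _ = (4 * K * 2 ^ t * A * R ^ (-t)) * S := by rw [tsum_mul_left]
        _ ≤ ((1 + 4 * K * 2 ^ t * S) * A) * R ^ (-t) := by
              have h6 : 0 ≤ R ^ (-t) := Real.rpow_nonneg (by linarith) _
              nlinarith [hS1, hA, hK, h6, h2t]
      · have h := hbound ξ (fun i hi => absurd i.isLt (by omega))
        calc ‖mft μ ξ‖ ≤ A * (1 + ‖ξ‖) ^ (-t) := h
        _ ≤ ((1 + 4 * K * 2 ^ t * S) * A) * (1 + ‖ξ‖) ^ (-t) := by
              apply mul_le_mul_of_nonneg_right _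
                (Real.rpow_nonneg (by positivity : (0:ℝ) ≤ 1 + ‖ξ‖) _)
              have hc : 0 < 4 * K * 2 ^ t * S * A :=
                mul_pos (mul_pos (mul_pos (mul_pos (by norm_num) hK) h2t)
                  (lt_of_lt_of_le one_pos hS1)) hA
              nlinarith [hc]
  obtain ⟨A, hA, hAbound⟩ := hind d
  refine ⟨A, fun ξ hξ => ?_⟩
  have h1 := hAbound ξ (fun i hi => absurd i.isLt (by omega))
  have h2 : (1 + ‖ξ‖) ^ (-t) ≤ ‖ξ‖ ^ (-t) :=
    Real.rpow_le_rpow_of_nonpos (by linarith) (by linarith) (by linarith)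
  calc ‖mft μ ξ‖ ≤ A * (1 + ‖ξ‖) ^ (-t) := h1
  _ ≤ A * ‖ξ‖ ^ (-t) := mul_le_mul_of_nonneg_left h2 hA.le
end
end

section
/- Let μ be a finite Borel measure on ℝ^d, θ ∈ (0,1], and p ∈ (1,∞). If μ̂ ∈ L^{2p/θ}(ℝ^d), then dim_F^θ μ ≥ dθ/p. -/
open MeasureTheory Filter Metric Set
open scoped ENNReal RealInnerProductSpace Topology

noncomputable section

lemma normExpAux (t : ℝ) : ‖Complex.exp ((t : ℂ) * Complex.I)‖ = 1 :=
  Complex.norm_exp_ofReal_mul_I t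

lemma mft_norm_le {d : ℕ} (μ : Measure (EuclideanSpace ℝ (Fin d))) [IsFiniteMeasure μ]
    (ξ : EuclideanSpace ℝ (Fin d)) : ‖mft μ ξ‖ ≤ (μ Set.univ).toReal := by
  have := norm_integral_le_of_norm_le_const (μ := μ)
    (f := fun x => Complex.exp ((-(2 * Real.pi * ⟪x, ξ⟫) : ℝ) * Complex.I)) (C := 1)
    (Filter.Eventually.of_forall fun x => le_of_eq (normExpAux _))
  rw [one_mul] at this
  exact this

lemma mft_continuous {d : ℕ} (μ : Measure (EuclideanSpace ℝ (Fin d))) [IsFiniteMeasure μ] :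
    Continuous (mft μ) := by
  apply continuous_of_dominated (bound := fun _ => 1)
  · intro ξ
    exact (Complex.continuous_exp.comp ((Complex.continuous_ofReal.comp
      ((continuous_const.mul (continuous_id.inner continuous_const)).neg)).mul
      continuous_const)).aestronglyMeasurable
  · intro ξ
    exact Filter.Eventually.of_forall fun x => le_of_eq (normExpAux _)
  · exact integrable_const 1
  · refine Filter.Eventually.of_forall fun x => ?_
    exact Complex.continuous_exp.comp ((Complex.continuous_ofReal.comp
      ((continuous_const.mul (continuous_const.inner continuous_id)).neg)).mul continuous_const)

lemma mft_nnnorm_le {d : ℕ} (μ : Measure (EuclideanSpace ℝ (Fin d))) [IsFiniteMeasure μ]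
    (ξ : EuclideanSpace ℝ (Fin d)) : (‖mft μ ξ‖₊ : ℝ≥0∞) ≤ μ Set.univ := by
  rw [← enorm_eq_nnnorm, ← ofReal_norm]
  refine le_trans (ENNReal.ofReal_le_ofReal (mft_norm_le μ ξ)) ?_
  rw [ENNReal.ofReal_toReal (measure_ne_top μ _)]

lemma lintegral_ball_rpow_lt_top {d : ℕ} {r : ℝ} (hr : -(d : ℝ) < r) (hr0 : r < 0) :
    ∫⁻ z in ball (0 : EuclideanSpace ℝ (Fin d)) 1, (‖z‖₊ : ℝ≥0∞) ^ r < ∞ := by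
  have hd : 0 < d := by
    by_contra h
    push_neg at h
    interval_cases d <;> simp_all <;> linarith
  have hfr : Module.finrank ℝ (EuclideanSpace ℝ (Fin d)) = d := finrank_euclideanSpace_fin
  set E := EuclideanSpace ℝ (Fin d)
  set ν := volume.restrict (ball (0 : E) 1) with hν
  have h0 : volume ({0} : Set E) = 0 := by
    have : ({0} : Set E) ⊆ closedBall 0 0 := by simp
    refine measure_mono_null this ?_
    rw [Measure.addHaar_closedBall _ _ le_rfl, hfr]
    simp [zero_pow hd.ne']
  have hae : ∀ᵐ z ∂ν, (‖z‖₊ : ℝ≥0∞) ^ r = ENNReal.ofReal (‖z‖ ^ r) := by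
    have : ∀ᵐ z ∂ν, z ≠ 0 := by
      refine ae_restrict_of_ae ?_
      rw [ae_iff]
      simpa using h0
    filter_upwards [this] with z hz
    rw [← ENNReal.ofReal_rpow_of_pos (norm_pos_iff.2 hz), ofReal_norm, enorm_eq_nnnorm]
  rw [lintegral_congr_ae hae]
  rw [lintegral_eq_lintegral_meas_le ν
    (Eventually.of_forall fun z => Real.rpow_nonneg (norm_nonneg z) r)
    ((measurable_norm.pow_const r).aemeasurable)]
  have key : ∀ t ∈ Ioi (0:ℝ), ν {a : E | t ≤ ‖a‖ ^ r} ≤ volume (closedBall (0:E) (t ^ r⁻¹)) := by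
    intro t ht
    refine le_trans (Measure.restrict_apply_le _ _) (measure_mono fun a ha => ?_)
    simp only [mem_setOf_eq] at ha
    have ha0 : a ≠ 0 := by
      rintro rfl
      rw [norm_zero, Real.zero_rpow hr0.ne] at ha
      exact absurd (lt_of_lt_of_le ht ha) (lt_irrefl 0)
    rw [mem_closedBall_zero_iff]
    exact (Real.le_rpow_inv_iff_of_neg (norm_pos_iff.2 ha0) ht hr0).2 ha
  calc ∫⁻ t in Ioi (0:ℝ), ν {a : E | t ≤ ‖a‖ ^ r}
      ≤ ∫⁻ t in Ioc (0:ℝ) 1 ∪ Ioi 1, ν {a : E | t ≤ ‖a‖ ^ r} :=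
        lintegral_mono_set Ioi_subset_Ioc_union_Ioi
    _ ≤ (∫⁻ t in Ioc (0:ℝ) 1, ν {a : E | t ≤ ‖a‖ ^ r}) +
        ∫⁻ t in Ioi (1:ℝ), ν {a : E | t ≤ ‖a‖ ^ r} := lintegral_union_le _ _ _
    _ < ∞ := by
        refine ENNReal.add_lt_top.2 ⟨?_, ?_⟩
        · calc (∫⁻ t in Ioc (0:ℝ) 1, ν {a : E | t ≤ ‖a‖ ^ r})
              ≤ ∫⁻ _ in Ioc (0:ℝ) 1, volume (ball (0:E) 1) := by
                refine lintegral_mono fun t => ?_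
                refine le_trans (measure_mono (subset_univ _)) ?_
                rw [hν, Measure.restrict_apply_univ]
          _ = volume (ball (0:E) 1) * volume (Ioc (0:ℝ) 1) := by
                rw [setLIntegral_const]
          _ < ∞ := ENNReal.mul_lt_top measure_ball_lt_top (by simp)
        · have hk : r⁻¹ * (d : ℝ) < -1 := by
            rw [inv_mul_eq_div, div_lt_iff_of_neg hr0]
            linarith
          calc (∫⁻ t in Ioi (1:ℝ), ν {a : E | t ≤ ‖a‖ ^ r})
              ≤ ∫⁻ t in Ioi (1:ℝ),
                  ENNReal.ofReal (t ^ (r⁻¹ * (d:ℝ))) * volume (ball (0:E) 1) := by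
                refine setLIntegral_mono ((ENNReal.measurable_ofReal.comp
                  (measurable_id.pow_const _)).mul_const _) fun t ht => ?_
                have ht0 : (0:ℝ) < t := lt_trans one_pos ht
                refine le_trans (key t ht0) ?_
                rw [Measure.addHaar_closedBall _ _ (Real.rpow_nonneg ht0.le r⁻¹), hfr,
                  ← Real.rpow_natCast (t ^ r⁻¹) d, ← Real.rpow_mul ht0.le]
          _ < ∞ := by
                rw [lintegral_mul_const' _ _ measure_ball_lt_top.ne]
                refine ENNReal.mul_lt_top ?_ measure_ball_lt_top
                have hint : IntegrableOn (fun t : ℝ => t ^ (r⁻¹ * (d:ℝ))) (Ioi 1) :=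
                  integrableOn_Ioi_rpow_of_lt hk one_pos
                have h2 := hint.2
                rw [HasFiniteIntegral] at h2
                refine lt_of_le_of_lt (lintegral_mono fun t => ?_) h2
                exact Real.ofReal_le_enorm _

lemma lintegral_compl_ball_rpow_lt_top {d : ℕ} {r : ℝ} (hr : r < -(d : ℝ)) :
    ∫⁻ z in (ball (0 : EuclideanSpace ℝ (Fin d)) 1)ᶜ, (‖z‖₊ : ℝ≥0∞) ^ r < ∞ := by
  set E := EuclideanSpace ℝ (Fin d)
  have hr0 : r < 0 := lt_of_lt_of_le hr (by simp)
  have hfr : Module.finrank ℝ E = d := finrank_euclideanSpace_fin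
  have hpt : ∀ z : E, z ∈ (ball (0:E) 1)ᶜ →
      (‖z‖₊ : ℝ≥0∞) ^ r ≤ ENNReal.ofReal ((2:ℝ) ^ (-r) * (1 + ‖z‖) ^ r) := by
    intro z hz
    rw [mem_compl_iff, mem_ball, dist_zero_right, not_lt] at hz
    have hz0 : (0:ℝ) < ‖z‖ := lt_of_lt_of_le one_pos hz
    have h1 : (‖z‖₊ : ℝ≥0∞) ^ r = ENNReal.ofReal (‖z‖ ^ r) := by
      rw [← ENNReal.ofReal_rpow_of_pos hz0, ofReal_norm, enorm_eq_nnnorm]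
    rw [h1]
    refine ENNReal.ofReal_le_ofReal ?_
    have h2 : (2 * ‖z‖ : ℝ) ^ r ≤ (1 + ‖z‖) ^ r :=
      Real.rpow_le_rpow_of_nonpos (by linarith) (by linarith) hr0.le
    have h3 : (2 * ‖z‖ : ℝ) ^ r = 2 ^ r * ‖z‖ ^ r :=
      Real.mul_rpow (by norm_num) hz0.le
    have h4 : (0:ℝ) < 2 ^ (-r) := Real.rpow_pos_of_pos two_pos _
    have h5 : (2:ℝ) ^ (-r) * 2 ^ r = 1 := by
      rw [← Real.rpow_add two_pos]
      simp
    calc ‖z‖ ^ r = 2 ^ (-r) * (2 ^ r * ‖z‖ ^ r) := by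
          rw [← mul_assoc, h5, one_mul]
      _ = 2 ^ (-r) * (2 * ‖z‖) ^ r := by rw [h3]
      _ ≤ 2 ^ (-r) * (1 + ‖z‖) ^ r := by nlinarith
  calc ∫⁻ z in (ball (0:E) 1)ᶜ, (‖z‖₊ : ℝ≥0∞) ^ r
      ≤ ∫⁻ z in (ball (0:E) 1)ᶜ, ENNReal.ofReal ((2:ℝ) ^ (-r) * (1 + ‖z‖) ^ r) := by
        refine setLIntegral_mono (ENNReal.measurable_ofReal.comp
          (measurable_const.mul ((measurable_const.add measurable_norm).pow_const r))) hpt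
    _ ≤ ∫⁻ z : E, ENNReal.ofReal ((2:ℝ) ^ (-r) * (1 + ‖z‖) ^ r) :=
        setLIntegral_le_lintegral _ _
    _ = ENNReal.ofReal ((2:ℝ) ^ (-r)) * ∫⁻ z : E, ENNReal.ofReal ((1 + ‖z‖) ^ (-(-r))) := by
        rw [← lintegral_const_mul' _ _ ENNReal.ofReal_ne_top]
        refine lintegral_congr fun z => ?_
        rw [← ENNReal.ofReal_mul (Real.rpow_pos_of_pos two_pos _).le, neg_neg]
    _ < ∞ := ENNReal.mul_lt_top ENNReal.ofReal_lt_top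
        (finite_integral_one_add_norm (by rw [hfr]; linarith))

lemma J_lt_top {d : ℕ} {θ p s : ℝ} (hθ : 0 < θ) (hp : 1 < p)
    (μ : Measure (EuclideanSpace ℝ (Fin d))) [IsFiniteMeasure μ]
    (hint : (∫⁻ z, (‖mft μ z‖₊ : ℝ≥0∞) ^ (2 * p / θ)) ≠ ∞)
    (hs0 : 0 < s) (hs : s < d * θ / p) : J μ s θ ≠ ∞ := by
  set E := EuclideanSpace ℝ (Fin d)
  have hp0 : (0:ℝ) < p := lt_trans one_pos hp
  have hd : (0:ℝ) < d := by
    by_contra h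
    push_neg at h
    have h1 : (d:ℝ) * θ ≤ 0 := by nlinarith
    have h2 : (d:ℝ) * θ / p ≤ 0 := div_nonpos_iff.2 (Or.inr ⟨h1, hp0.le⟩)
    linarith [hs0.trans hs]
  set r := s / θ - (d:ℝ) with hrdef
  have hsθ : 0 < s / θ := div_pos hs0 hθ
  have hrd : -(d:ℝ) < r := by rw [hrdef]; linarith
  have hsp : s * p < (d:ℝ) * θ := by
    have := (lt_div_iff₀ hp0).1 hs
    linarith
  have hsd : s < (d:ℝ) * θ := by nlinarith
  have hr0 : r < 0 := by
    rw [hrdef, sub_neg, div_lt_iff₀ hθ]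
    linarith
  set q := Real.conjExponent p with hqdef
  have hpq : p.HolderConjugate q := Real.HolderConjugate.conjExponent hp
  have hq0 : 0 < q := hpq.symm.pos
  have h6 : s / θ < (d:ℝ) / p := by
    rw [div_lt_div_iff₀ hθ hp0]
    linarith
  have h8 : ((d:ℝ) / p - d) * q = -(d:ℝ) := by
    have h7 : p⁻¹ - 1 = -q⁻¹ := hpq.inv_sub_one
    have hqne : q ≠ 0 := hq0.ne'
    rw [show (d:ℝ)/p - d = (d:ℝ) * (p⁻¹ - 1) by ring, h7]
    field_simp
  have hrq : r * q < -(d:ℝ) := by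
    calc r * q < ((d:ℝ)/p - d) * q := by
          refine mul_lt_mul_of_pos_right ?_ hq0
          rw [hrdef]; linarith
      _ = -(d:ℝ) := h8
  -- notation
  set F := fun z : E => (‖mft μ z‖₊ : ℝ≥0∞) ^ (2 / θ) with hFdef
  set w := fun z : E => (‖z‖₊ : ℝ≥0∞) ^ r with hwdef
  have hmftm : Measurable fun z : E => (‖mft μ z‖₊ : ℝ≥0∞) :=
    (mft_continuous μ).nnnorm.measurable.coe_nnreal_ennreal
  have hFm : Measurable F := hmftm.pow_const _
  have hwm : Measurable w := measurable_nnnorm.coe_nnreal_ennreal.pow_const _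
  have hFb : ∀ z, F z ≤ (μ Set.univ) ^ (2 / θ) := fun z =>
    ENNReal.rpow_le_rpow (mft_nnnorm_le μ z) (by positivity)
  have hCne : (μ Set.univ) ^ (2 / θ) ≠ ∞ :=
    (ENNReal.rpow_lt_top_of_nonneg (by positivity) (measure_ne_top μ _)).ne
  have hball : ∫⁻ z in ball (0:E) 1, F z * w z < ∞ := by
    calc ∫⁻ z in ball (0:E) 1, F z * w z
        ≤ ∫⁻ z in ball (0:E) 1, (μ Set.univ) ^ (2 / θ) * w z :=
          lintegral_mono fun z => mul_le_mul_left (hFb z) _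
      _ = (μ Set.univ) ^ (2 / θ) * ∫⁻ z in ball (0:E) 1, w z :=
          lintegral_const_mul' _ _ hCne
      _ < ∞ := ENNReal.mul_lt_top hCne.lt_top (lintegral_ball_rpow_lt_top hrd hr0)
  have htail : ∫⁻ z in (ball (0:E) 1)ᶜ, F z * w z < ∞ := by
    have hH := ENNReal.lintegral_mul_le_Lp_mul_Lq (volume.restrict (ball (0:E) 1)ᶜ) hpq
      hFm.aemeasurable hwm.aemeasurable
    refine lt_of_le_of_lt hH (ENNReal.mul_lt_top ?_ ?_)
    · refine ENNReal.rpow_lt_top_of_nonneg (by positivity) ?_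
      have heq : ∀ z : E, F z ^ p = (‖mft μ z‖₊ : ℝ≥0∞) ^ (2 * p / θ) := fun z => by
        rw [hFdef, ← ENNReal.rpow_mul]
        congr 1
        ring
      simp_rw [heq]
      exact (lt_of_le_of_lt (setLIntegral_le_lintegral _ _) (lt_top_iff_ne_top.2 hint)).ne
    · refine ENNReal.rpow_lt_top_of_nonneg (by positivity) ?_
      have heq : ∀ z : E, w z ^ q = (‖z‖₊ : ℝ≥0∞) ^ (r * q) := fun z => by
        rw [hwdef, ← ENNReal.rpow_mul]
      simp_rw [heq]
      exact (lintegral_compl_ball_rpow_lt_top hrq).ne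
  have hI : ∫⁻ z, F z * w z < ∞ := by
    rw [← lintegral_add_compl (fun z => F z * w z) measurableSet_ball]
    exact ENNReal.add_lt_top.2 ⟨hball, htail⟩
  rw [J]
  exact (ENNReal.rpow_lt_top_of_nonneg hθ.le hI.ne).ne

/-- if μ̂ ∈ L^{2p/θ}(ℝ^d) then `dim_F^θ μ ≥ dθ/p`. -/
theorem stmt13 (d : ℕ) (θ p : ℝ) (hθ : 0 < θ) (hθ1 : θ ≤ 1) (hp : 1 < p)
    (μ : Measure (EuclideanSpace ℝ (Fin d))) [IsFiniteMeasure μ]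
    (hint : (∫⁻ z, (‖mft μ z‖₊ : ℝ≥0∞) ^ (2 * p / θ)) ≠ ∞) :
    (((d : ℝ) * θ / p : ℝ) : EReal) ≤ dimFθ μ θ := by
  simp only [dimFθ]
  rw [if_neg hθ.ne']
  rcases Nat.eq_zero_or_pos d with hd0 | hdpos
  · subst hd0
    haveI : Subsingleton (EuclideanSpace ℝ (Fin 0)) := ⟨fun a b => by ext i; exact Fin.elim0 i⟩
    have hmem : ((0:ℝ):EReal) ∈
        {x : EReal | ∃ s : ℝ, x = (s:EReal) ∧ 0 ≤ s ∧ J μ s θ ≠ ∞} := by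
      refine ⟨0, rfl, le_refl 0, ?_⟩
      rw [J]
      refine (ENNReal.rpow_lt_top_of_nonneg hθ.le ?_).ne
      have hvol : volume (Set.univ : Set (EuclideanSpace ℝ (Fin 0))) < ∞ := by
        refine lt_of_le_of_lt (measure_mono (fun x _ => ?_))
          (measure_closedBall_lt_top (x := (0 : EuclideanSpace ℝ (Fin 0))) (r := 1))
        have hx : x = 0 := Subsingleton.elim x 0
        simp [hx]
      have hCne : (μ Set.univ) ^ (2 / θ) ≠ ∞ :=
        (ENNReal.rpow_lt_top_of_nonneg (by positivity) (measure_ne_top μ _)).ne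
      have hle : (∫⁻ z : EuclideanSpace ℝ (Fin 0), (‖mft μ z‖₊ : ℝ≥0∞) ^ (2 / θ) *
          (‖z‖₊ : ℝ≥0∞) ^ ((0:ℝ) / θ - ((0:ℕ):ℝ))) ≤ (μ Set.univ) ^ (2 / θ) * volume (Set.univ : Set (EuclideanSpace ℝ (Fin 0))) := by
        rw [← lintegral_const]
        refine lintegral_mono fun z => ?_
        have he : ((0:ℝ) / θ - ((0:ℕ):ℝ)) = 0 := by simp
        rw [he, ENNReal.rpow_zero, mul_one]
        exact ENNReal.rpow_le_rpow (mft_nnnorm_le μ z) (by positivity)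
      exact (lt_of_le_of_lt hle (ENNReal.mul_lt_top hCne.lt_top hvol)).ne
    have h0 : (((0:ℕ):ℝ) * θ / p : ℝ) = (0:ℝ) := by simp
    rw [h0]
    exact le_sSup hmem
  · have hd' : (0:ℝ) < (d:ℝ) := Nat.cast_pos.2 hdpos
    have hc : (0:ℝ) < (d:ℝ) * θ / p := div_pos (mul_pos hd' hθ) (lt_trans one_pos hp)
    refine le_of_forall_lt fun x hx => ?_
    have h0c : ((0:ℝ):EReal) < (((d:ℝ) * θ / p : ℝ) : EReal) := by exact_mod_cast hc
    have hax : max x ((0:ℝ):EReal) < (((d:ℝ) * θ / p : ℝ) : EReal) := max_lt hx h0c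
    obtain ⟨z, hz1, hz2⟩ := EReal.exists_between_coe_real hax
    have hz0 : (0:ℝ) < z := by
      have := lt_of_le_of_lt (le_max_right x ((0:ℝ):EReal)) hz1
      exact_mod_cast this
    have hzc : z < (d:ℝ) * θ / p := by exact_mod_cast hz2
    refine lt_of_lt_of_le (lt_of_le_of_lt (le_max_left x _) hz1) (le_sSup ?_)
    exact ⟨z, rfl, hz0.le, J_lt_top hθ hp μ hint hz0 hzc⟩
end
end
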